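/- Let K be a nonnegative n×n matrix, α ∈ [0,1], S_α(K) the matrix with entries K(i,j)^α K(j,i)^{1−α}, and S(K) = S_{1/2}(K). Then r(S(K)) ≤ r(S_α(K)) ≤ r(K). -/

import Mathlib

open scoped ENNReal
open Finset

noncomputable def specRad {n : ℕ} (A : Matrix (Fin n) (Fin n) ℝ) : ℝ≥0∞ :=
  spectralRadius ℂ (A.map (algebraMap ℝ ℂ))
noncomputable def opNorm {n : ℕ} (A : Matrix (Fin n) (Fin n) ℝ) : ℝ :=
  ‖Matrix.toEuclideanCLM (𝕜 := ℝ) A‖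

section Aux

open Matrix Filter
open scoped Topology

attribute [local instance] Matrix.linftyOpNormedRing Matrix.linftyOpNormedAlgebra

private lemma holder_real {ι : Type*} (s : Finset ι) (a b : ι → ℝ) (ha : ∀ i ∈ s, 0 ≤ a i)
    (hb : ∀ i ∈ s, 0 ≤ b i) {β : ℝ} (h0 : 0 < β) (h1 : β < 1) :
    ∑ i ∈ s, a i ^ β * b i ^ (1 - β) ≤ (∑ i ∈ s, a i) ^ β * (∑ i ∈ s, b i) ^ (1 - β) := by
  have hβ' : 0 < 1 - β := by linarith
  have hpq : Real.HolderConjugate (1/β) (1/(1-β)) := by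
    rw [Real.holderConjugate_iff]
    constructor
    · rw [lt_div_iff₀ h0]; linarith
    · rw [one_div, one_div, inv_inv, inv_inv]; ring
  have H := Real.inner_le_Lp_mul_Lq_of_nonneg (s := s) hpq
    (f := fun i => a i ^ β) (g := fun i => b i ^ (1 - β))
    (fun i hi => Real.rpow_nonneg (ha i hi) _) (fun i hi => Real.rpow_nonneg (hb i hi) _)
  calc ∑ i ∈ s, a i ^ β * b i ^ (1 - β) ≤
      (∑ i ∈ s, (a i ^ β) ^ (1/β)) ^ (1/(1/β)) * (∑ i ∈ s, (b i ^ (1-β)) ^ (1/(1-β))) ^ (1/(1/(1-β))) := H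
    _ = (∑ i ∈ s, a i) ^ β * (∑ i ∈ s, b i) ^ (1 - β) := by
        rw [one_div_one_div, one_div_one_div]
        congr 2
        · exact Finset.sum_congr rfl fun i hi => by
            rw [← Real.rpow_mul (ha i hi), mul_one_div_cancel h0.ne', Real.rpow_one]
        · exact Finset.sum_congr rfl fun i hi => by
            rw [← Real.rpow_mul (hb i hi), mul_one_div_cancel hβ'.ne', Real.rpow_one]

private lemma holder_nnreal {ι : Type*} (s : Finset ι) (a b : ι → NNReal) {β : ℝ}
    (h0 : 0 < β) (h1 : β < 1) :
    ∑ i ∈ s, a i ^ β * b i ^ (1 - β) ≤ (∑ i ∈ s, a i) ^ β * (∑ i ∈ s, b i) ^ (1 - β) := by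
  have hβ' : 0 < 1 - β := by linarith
  have hpq : Real.HolderConjugate (1/β) (1/(1-β)) := by
    rw [Real.holderConjugate_iff]
    constructor
    · rw [lt_div_iff₀ h0]; linarith
    · rw [one_div, one_div, inv_inv, inv_inv]; ring
  have H := NNReal.inner_le_Lp_mul_Lq s (fun i => a i ^ β) (fun i => b i ^ (1 - β)) hpq
  calc ∑ i ∈ s, a i ^ β * b i ^ (1 - β) ≤
      (∑ i ∈ s, (a i ^ β) ^ (1/β)) ^ (1/(1/β)) * (∑ i ∈ s, (b i ^ (1-β)) ^ (1/(1-β))) ^ (1/(1/(1-β))) := H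
    _ = (∑ i ∈ s, a i) ^ β * (∑ i ∈ s, b i) ^ (1 - β) := by
        rw [one_div_one_div, one_div_one_div]
        congr 2
        · exact Finset.sum_congr rfl fun i hi => by
            rw [← NNReal.rpow_mul, mul_one_div_cancel h0.ne', NNReal.rpow_one]
        · exact Finset.sum_congr rfl fun i hi => by
            rw [← NNReal.rpow_mul, mul_one_div_cancel hβ'.ne', NNReal.rpow_one]

variable {n : ℕ}

private lemma entry_pow_nonneg (A : Matrix (Fin n) (Fin n) ℝ) (hA : ∀ i j, 0 ≤ A i j) (m : ℕ) :
    ∀ i j, 0 ≤ (A ^ m) i j := by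
  induction m with
  | zero => intro i j; rw [pow_zero]; by_cases h : i = j <;> simp [Matrix.one_apply, h]
  | succ m ih =>
      intro i j
      rw [pow_succ, Matrix.mul_apply]
      exact Finset.sum_nonneg fun k _ => mul_nonneg (ih i k) (hA k j)

private lemma entry_holder (P : Matrix (Fin n) (Fin n) ℝ) (hP : ∀ i j, 0 ≤ P i j) {β : ℝ}
    (h0 : 0 < β) (h1 : β < 1) (m : ℕ) (i j : Fin n) :
    ((Matrix.of fun i j => P i j ^ β * P j i ^ (1 - β)) ^ m) i j
      ≤ ((P ^ m) i j) ^ β * ((P ^ m) j i) ^ (1 - β) := by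
  have hβ' : 0 < 1 - β := by linarith
  induction m generalizing i j with
  | zero =>
      rw [pow_zero, pow_zero]
      by_cases h : i = j
      · simp [Matrix.one_apply, h, Real.one_rpow]
      · have h' : j ≠ i := fun hh => h hh.symm
        simp [Matrix.one_apply, h, h', Real.zero_rpow h0.ne', Real.zero_rpow hβ'.ne']
  | succ m ih =>
      set S := Matrix.of fun i j => P i j ^ β * P j i ^ (1 - β) with hS
      have hSnn : ∀ i j, 0 ≤ S i j := fun i j =>
        mul_nonneg (Real.rpow_nonneg (hP i j) _) (Real.rpow_nonneg (hP j i) _)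
      rw [pow_succ', Matrix.mul_apply]
      calc ∑ k, S i k * (S ^ m) k j
          ≤ ∑ k, (P i k * (P ^ m) k j) ^ β * (P k i * (P ^ m) j k) ^ (1 - β) := by
            refine Finset.sum_le_sum fun k _ => ?_
            rw [Real.mul_rpow (hP i k) (entry_pow_nonneg P hP m k j),
              Real.mul_rpow (hP k i) (entry_pow_nonneg P hP m j k)]
            have : S i k * (S ^ m) k j ≤ (P i k ^ β * P k i ^ (1 - β)) *
                (((P ^ m) k j) ^ β * ((P ^ m) j k) ^ (1 - β)) :=
              mul_le_mul_of_nonneg_left (ih k j) (hSnn i k)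
            calc S i k * (S ^ m) k j ≤ _ := this
              _ = P i k ^ β * (P ^ m) k j ^ β * (P k i ^ (1 - β) * (P ^ m) j k ^ (1 - β)) := by
                  ring
        _ ≤ (∑ k, P i k * (P ^ m) k j) ^ β * (∑ k, P k i * (P ^ m) j k) ^ (1 - β) :=
            holder_real univ _ _
              (fun k _ => mul_nonneg (hP i k) (entry_pow_nonneg P hP m k j))
              (fun k _ => mul_nonneg (hP k i) (entry_pow_nonneg P hP m j k)) h0 h1
        _ = ((P ^ (m+1)) i j) ^ β * ((P ^ (m+1)) j i) ^ (1 - β) := by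
            congr 1
            · rw [pow_succ', Matrix.mul_apply]
            · rw [pow_succ, Matrix.mul_apply]
              congr 1
              exact Finset.sum_congr rfl fun k _ => mul_comm _ _

private lemma nnnorm_mono_matrix (A B : Matrix (Fin n) (Fin n) ℝ) (hA : ∀ i j, 0 ≤ A i j)
    (hAB : ∀ i j, A i j ≤ B i j) : ‖A‖₊ ≤ ‖B‖₊ := by
  rw [Matrix.linfty_opNNNorm_def, Matrix.linfty_opNNNorm_def]
  refine Finset.sup_mono_fun fun i _ => Finset.sum_le_sum fun j _ => ?_
  have h1 : ‖A i j‖₊ = (A i j).toNNReal := by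
    ext; simp [Real.norm_of_nonneg (hA i j), Real.coe_toNNReal _ (hA i j)]
  have h2 : ‖B i j‖₊ = (B i j).toNNReal := by
    ext; simp [Real.norm_of_nonneg ((hA i j).trans (hAB i j)),
      Real.coe_toNNReal _ ((hA i j).trans (hAB i j))]
  rw [h1, h2]
  exact Real.toNNReal_mono (hAB i j)

private lemma nnnorm_map_complex (A : Matrix (Fin n) (Fin n) ℝ) :
    ‖A.map (algebraMap ℝ ℂ)‖₊ = ‖A‖₊ := by
  rw [Matrix.linfty_opNNNorm_def, Matrix.linfty_opNNNorm_def]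
  congr 1; funext i; congr 1; funext j
  simp [Matrix.map_apply, Complex.nnnorm_real]

private lemma nnnorm_rpow_entry (x y : ℝ) (hx : 0 ≤ x) (hy : 0 ≤ y) (β : ℝ) :
    ‖x ^ β * y ^ (1 - β)‖₊ = ‖x‖₊ ^ β * ‖y‖₊ ^ (1 - β) := by
  ext
  push_cast [NNReal.coe_rpow]
  rw [Real.norm_of_nonneg (mul_nonneg (Real.rpow_nonneg hx _) (Real.rpow_nonneg hy _)),
    Real.norm_of_nonneg hx, Real.norm_of_nonneg hy]

private lemma nnnorm_holder (B C : Matrix (Fin n) (Fin n) ℝ) (hB : ∀ i j, 0 ≤ B i j)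
    (hC : ∀ i j, 0 ≤ C i j) {β : ℝ} (h0 : 0 < β) (h1 : β < 1) :
    ‖(Matrix.of fun i j => B i j ^ β * C i j ^ (1 - β))‖₊ ≤ ‖B‖₊ ^ β * ‖C‖₊ ^ (1 - β) := by
  rw [Matrix.linfty_opNNNorm_def, Matrix.linfty_opNNNorm_def, Matrix.linfty_opNNNorm_def]
  refine Finset.sup_le fun i _ => ?_
  calc (∑ j, ‖(Matrix.of fun i j => B i j ^ β * C i j ^ (1 - β)) i j‖₊)
      = ∑ j, ‖B i j‖₊ ^ β * ‖C i j‖₊ ^ (1 - β) := by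
        refine Finset.sum_congr rfl fun j _ => ?_
        exact nnnorm_rpow_entry _ _ (hB i j) (hC i j) β
    _ ≤ (∑ j, ‖B i j‖₊) ^ β * (∑ j, ‖C i j‖₊) ^ (1 - β) := holder_nnreal _ _ _ h0 h1
    _ ≤ (univ.sup fun i => ∑ j, ‖B i j‖₊) ^ β * (univ.sup fun i => ∑ j, ‖C i j‖₊) ^ (1 - β) := by
        exact mul_le_mul'
          (NNReal.rpow_le_rpow (Finset.le_sup (f := fun i => ∑ j, ‖B i j‖₊) (Finset.mem_univ i)) h0.le)
          (NNReal.rpow_le_rpow (Finset.le_sup (f := fun i => ∑ j, ‖C i j‖₊) (Finset.mem_univ i)) (by linarith))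

private lemma spectrum_transpose (M : Matrix (Fin n) (Fin n) ℂ) :
    spectrum ℂ Mᵀ = spectrum ℂ M := by
  ext z
  rw [spectrum.mem_iff, spectrum.mem_iff, not_iff_not]
  have key : algebraMap ℂ (Matrix (Fin n) (Fin n) ℂ) z - Mᵀ
      = (algebraMap ℂ (Matrix (Fin n) (Fin n) ℂ) z - M)ᵀ := by
    rw [Matrix.transpose_sub]
    congr 1
    rw [Algebra.algebraMap_eq_smul_one, Matrix.transpose_smul, Matrix.transpose_one]
  rw [key, Matrix.isUnit_iff_isUnit_det, Matrix.det_transpose, ← Matrix.isUnit_iff_isUnit_det]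

private lemma specRad_transpose (P : Matrix (Fin n) (Fin n) ℝ) : specRad Pᵀ = specRad P := by
  unfold specRad
  rw [Matrix.transpose_map]
  unfold spectralRadius
  rw [spectrum_transpose]

/-- The master lemma: `r(S_β(P)) ≤ r(P)` for entrywise-nonnegative `P` and `β ∈ [0,1]`. -/
private lemma specRad_S_le (P : Matrix (Fin n) (Fin n) ℝ) (hP : ∀ i j, 0 ≤ P i j) {β : ℝ}
    (h0 : 0 ≤ β) (h1 : β ≤ 1) :
    specRad (Matrix.of fun i j => P i j ^ β * P j i ^ (1 - β)) ≤ specRad P := by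
  rcases eq_or_lt_of_le h0 with hβ0 | hβpos
  · have : (Matrix.of fun i j => P i j ^ β * P j i ^ (1 - β)) = Pᵀ := by
      ext i j
      simp [← hβ0, Real.rpow_zero, Real.rpow_one]
    rw [this, specRad_transpose]
  rcases eq_or_lt_of_le h1 with hβ1 | hβlt
  · have : (Matrix.of fun i j => P i j ^ β * P j i ^ (1 - β)) = P := by
      ext i j
      simp [hβ1, Real.rpow_one, Real.rpow_zero]
    rw [this]
  rcases Nat.eq_zero_or_pos n with hn | hn
  · subst hn
    have : (Matrix.of fun i j => P i j ^ β * P j i ^ (1 - β)) = P := by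
      ext i j; exact i.elim0
    rw [this]
  haveI : Nonempty (Fin n) := ⟨⟨0, hn⟩⟩
  haveI : NormOneClass (Matrix (Fin n) (Fin n) ℂ) := Matrix.linfty_opNormOneClass
  set S : Matrix (Fin n) (Fin n) ℝ := Matrix.of fun i j => P i j ^ β * P j i ^ (1 - β) with hSdef
  have hSnn : ∀ i j, 0 ≤ S i j := fun i j =>
    mul_nonneg (Real.rpow_nonneg (hP i j) _) (Real.rpow_nonneg (hP j i) _)
  have hmap : ∀ (A : Matrix (Fin n) (Fin n) ℝ) (m : ℕ),
      (A.map (algebraMap ℝ ℂ)) ^ m = (A ^ m).map (algebraMap ℝ ℂ) := by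
    intro A m
    rw [← RingHom.mapMatrix_apply, ← RingHom.mapMatrix_apply, ← map_pow]
  have hnn : ∀ (A : Matrix (Fin n) (Fin n) ℝ) (m : ℕ),
      ‖(A.map (algebraMap ℝ ℂ)) ^ m‖₊ = ‖A ^ m‖₊ := by
    intro A m
    rw [hmap, nnnorm_map_complex]
  -- Gelfand's formula
  have hGS := spectrum.pow_nnnorm_pow_one_div_tendsto_nhds_spectralRadius
    (S.map (algebraMap ℝ ℂ))
  have hGP := spectrum.pow_nnnorm_pow_one_div_tendsto_nhds_spectralRadius
    (P.map (algebraMap ℝ ℂ))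
  have hGT := spectrum.pow_nnnorm_pow_one_div_tendsto_nhds_spectralRadius
    (Pᵀ.map (algebraMap ℝ ℂ))
  have hTP : spectralRadius ℂ (Pᵀ.map (algebraMap ℝ ℂ)) = specRad P := specRad_transpose P
  rw [hTP] at hGT
  -- key norm bound
  have key : ∀ m : ℕ, ‖S ^ m‖₊ ≤ ‖P ^ m‖₊ ^ β * ‖Pᵀ ^ m‖₊ ^ (1 - β) := by
    intro m
    have step1 : ‖S ^ m‖₊ ≤
        ‖(Matrix.of fun i j => (P ^ m) i j ^ β * (Pᵀ ^ m) i j ^ (1 - β))‖₊ := by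
      refine nnnorm_mono_matrix _ _ (entry_pow_nonneg S hSnn m) fun i j => ?_
      have ht : (Pᵀ ^ m) i j = (P ^ m) j i := by
        rw [← Matrix.transpose_pow]; rfl
      simp only [Matrix.of_apply, ht]
      exact entry_holder P hP hβpos hβlt m i j
    have step2 := nnnorm_holder (P ^ m) (Pᵀ ^ m)
      (entry_pow_nonneg P hP m)
      (entry_pow_nonneg Pᵀ (fun i j => hP j i) m) hβpos hβlt
    exact step1.trans step2
  -- ENNReal comparison
  have hcomp : ∀ m : ℕ, (‖(S.map (algebraMap ℝ ℂ)) ^ m‖₊ : ℝ≥0∞) ^ (1 / (m:ℝ)) ≤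
      ((‖(P.map (algebraMap ℝ ℂ)) ^ m‖₊ : ℝ≥0∞) ^ (1 / (m:ℝ))) ^ β *
        ((‖(Pᵀ.map (algebraMap ℝ ℂ)) ^ m‖₊ : ℝ≥0∞) ^ (1 / (m:ℝ))) ^ (1 - β) := by
    intro m
    have hm : (0:ℝ) ≤ 1 / (m:ℝ) := by positivity
    rw [hnn, hnn, hnn]
    calc (‖S ^ m‖₊ : ℝ≥0∞) ^ (1 / (m:ℝ))
        ≤ ((‖P ^ m‖₊ ^ β * ‖Pᵀ ^ m‖₊ ^ (1 - β) : NNReal) : ℝ≥0∞) ^ (1 / (m:ℝ)) := by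
          exact ENNReal.rpow_le_rpow (ENNReal.coe_le_coe.2 (key m)) hm
      _ = ((‖P ^ m‖₊ : ℝ≥0∞) ^ (1 / (m:ℝ))) ^ β * ((‖Pᵀ ^ m‖₊ : ℝ≥0∞) ^ (1 / (m:ℝ))) ^ (1 - β) := by
          rw [ENNReal.coe_mul, ENNReal.coe_rpow_of_nonneg _ hβpos.le,
            ENNReal.coe_rpow_of_nonneg _ (by linarith : (0:ℝ) ≤ 1 - β)]
          rw [ENNReal.mul_rpow_of_nonneg _ _ hm, ← ENNReal.rpow_mul, ← ENNReal.rpow_mul,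
            mul_comm β (1 / (m:ℝ)), mul_comm (1 - β) (1 / (m:ℝ)),
            ENNReal.rpow_mul, ENNReal.rpow_mul]
  -- finiteness
  have hfinP : specRad P ≠ ⊤ := by
    have h := spectrum.spectralRadius_le_nnnorm (𝕜 := ℂ) (P.map (algebraMap ℝ ℂ))
    exact ne_of_lt (lt_of_le_of_lt h ENNReal.coe_lt_top)
  -- limit of RHS
  have hlim : Filter.Tendsto (fun m : ℕ =>
      ((‖(P.map (algebraMap ℝ ℂ)) ^ m‖₊ : ℝ≥0∞) ^ (1 / (m:ℝ))) ^ β *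
        ((‖(Pᵀ.map (algebraMap ℝ ℂ)) ^ m‖₊ : ℝ≥0∞) ^ (1 / (m:ℝ))) ^ (1 - β))
      Filter.atTop (𝓝 ((specRad P) ^ β * (specRad P) ^ (1 - β))) := by
    have t1 : Filter.Tendsto (fun m : ℕ =>
        ((‖(P.map (algebraMap ℝ ℂ)) ^ m‖₊ : ℝ≥0∞) ^ (1 / (m:ℝ))) ^ β)
        Filter.atTop (𝓝 ((specRad P) ^ β)) :=
      ((ENNReal.continuous_rpow_const (y := β)).tendsto
        (spectralRadius ℂ (P.map (algebraMap ℝ ℂ)))).comp hGP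
    have t2 : Filter.Tendsto (fun m : ℕ =>
        ((‖(Pᵀ.map (algebraMap ℝ ℂ)) ^ m‖₊ : ℝ≥0∞) ^ (1 / (m:ℝ))) ^ (1 - β))
        Filter.atTop (𝓝 ((specRad P) ^ (1 - β))) :=
      ((ENNReal.continuous_rpow_const (y := 1 - β)).tendsto (specRad P)).comp hGT
    exact ENNReal.Tendsto.mul t1
      (Or.inr (ENNReal.rpow_lt_top_of_nonneg (by linarith : (0:ℝ) ≤ 1 - β) hfinP).ne) t2
      (Or.inr (ENNReal.rpow_lt_top_of_nonneg hβpos.le hfinP).ne)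
  have main := le_of_tendsto_of_tendsto' hGS hlim hcomp
  rcases eq_or_ne (specRad P) 0 with hr0 | hr0
  · rw [hr0] at main ⊢
    rwa [ENNReal.zero_rpow_of_pos hβpos, zero_mul] at main
  · rw [← ENNReal.rpow_add β (1 - β) hr0 hfinP] at main
    rwa [show β + (1 - β) = (1:ℝ) by ring, ENNReal.rpow_one] at main

private lemma geom_collect (z : ℝ) (hz : 0 ≤ z) (α : ℝ) :
    z ^ (α * ((1:ℝ)/2)) * z ^ ((1 - α) * ((1:ℝ)/2)) = z ^ ((1:ℝ)/2) := by
  have e : α * ((1:ℝ)/2) + (1 - α) * ((1:ℝ)/2) = (1:ℝ)/2 := by ring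
  rw [← Real.rpow_add' hz (by rw [e]; norm_num), e]

end Aux

theorem stmt14 {n : ℕ} (K : Matrix (Fin n) (Fin n) ℝ) (hK : ∀ i j, 0 ≤ K i j)
    (α : ℝ) (hα : α ∈ Set.Icc (0:ℝ) 1) :
    specRad (Matrix.of fun i j => (K i j) ^ ((1:ℝ)/2) * (K j i) ^ ((1:ℝ)/2)) ≤
        specRad (Matrix.of fun i j => (K i j) ^ α * (K j i) ^ (1 - α)) ∧
      specRad (Matrix.of fun i j => (K i j) ^ α * (K j i) ^ (1 - α)) ≤ specRad K := by
  obtain ⟨h0, h1⟩ := hα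
  constructor
  · set A : Matrix (Fin n) (Fin n) ℝ := Matrix.of fun i j => (K i j) ^ α * (K j i) ^ (1 - α)
      with hAdef
    have hAnn : ∀ i j, 0 ≤ A i j := fun i j =>
      mul_nonneg (Real.rpow_nonneg (hK i j) _) (Real.rpow_nonneg (hK j i) _)
    have hmain := specRad_S_le A hAnn (β := (1:ℝ)/2) (by norm_num) (by norm_num)
    have hmat : (Matrix.of fun i j => A i j ^ ((1:ℝ)/2) * A j i ^ (1 - (1:ℝ)/2)) =
        Matrix.of fun i j => (K i j) ^ ((1:ℝ)/2) * (K j i) ^ ((1:ℝ)/2) := by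
      ext i j
      simp only [Matrix.of_apply, hAdef]
      rw [show (1 - (1:ℝ)/2) = (1:ℝ)/2 by norm_num]
      rw [Real.mul_rpow (Real.rpow_nonneg (hK i j) _) (Real.rpow_nonneg (hK j i) _),
        Real.mul_rpow (Real.rpow_nonneg (hK j i) _) (Real.rpow_nonneg (hK i j) _),
        ← Real.rpow_mul (hK i j), ← Real.rpow_mul (hK j i),
        ← Real.rpow_mul (hK j i), ← Real.rpow_mul (hK i j)]
      calc K i j ^ (α * ((1:ℝ)/2)) * K j i ^ ((1 - α) * ((1:ℝ)/2)) *
            (K j i ^ (α * ((1:ℝ)/2)) * K i j ^ ((1 - α) * ((1:ℝ)/2)))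
          = (K i j ^ (α * ((1:ℝ)/2)) * K i j ^ ((1 - α) * ((1:ℝ)/2))) *
            (K j i ^ (α * ((1:ℝ)/2)) * K j i ^ ((1 - α) * ((1:ℝ)/2))) := by ring
        _ = K i j ^ ((1:ℝ)/2) * K j i ^ ((1:ℝ)/2) := by
            rw [geom_collect _ (hK i j), geom_collect _ (hK j i)]
    rw [hmat] at hmain
    exact hmain
  · exact specRad_S_le K hK h0 h1
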